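/- Let L > 0 and c_p > 0. For each t ∈ ℕ let f_t : E → ℝ be differentiable and L-smooth, let ℓ_t ∈ ℝ satisfy ℓ_t ≤ f_t(y) for all y ∈ E, and let x_t ∈ E be a point with ∇f_t(x_t) ≠ 0. Let (η_t) be the AdaSPS stepsizes. Then for every t ∈ ℕ: 1/(2c_p L · √(Σ_{s=0}^t (f_s(x_s) − ℓ_s))) ≤ η_t ≤ (f_t(x_t) − ℓ_t)/(c_p‖∇f_t(x_t)‖² · √(Σ_{s=0}^t (f_s(x_s) − ℓ_s))). -/

import Mathlib

open scoped RealInnerProductSpace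

lemma grad_sq_le {E : Type*} [NormedAddCommGroup E] [InnerProductSpace ℝ E] [CompleteSpace E]
    {L : ℝ} (hL : 0 < L) {f : E → ℝ} {G : E → E} {ℓ : ℝ}
    (hgrad : ∀ y, HasGradientAt f (G y) y)
    (hsmooth : ∀ u v, ‖G u - G v‖ ≤ L * ‖u - v‖)
    (hℓ : ∀ y, ℓ ≤ f y) (x : E) :
    ‖G x‖ ^ 2 ≤ 2 * L * (f x - ℓ) := by
  set v : E := -L⁻¹ • G x with hv
  set ψ : ℝ → ℝ := fun t => f (x + t • v) - t * ⟪G x, v⟫ - L / 2 * t ^ 2 * ‖v‖ ^ 2 with hψ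
  have hd : ∀ t : ℝ, HasDerivAt ψ
      (⟪G (x + t • v), v⟫ - ⟪G x, v⟫ - L * t * ‖v‖ ^ 2) t := by
    intro t
    have hc : HasDerivAt (fun t : ℝ => x + t • v) v t := by
      simpa using ((hasDerivAt_id t).smul_const v).const_add x
    have h1 : HasDerivAt (fun t : ℝ => f (x + t • v)) ⟪G (x + t • v), v⟫ t := by
      have := ((hgrad (x + t • v)).hasFDerivAt).comp_hasDerivAt t hc
      simp at this; exact this
    have h2 : HasDerivAt (fun t : ℝ => t * ⟪G x, v⟫) ⟪G x, v⟫ t := by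
      simpa using (hasDerivAt_id t).mul_const ⟪G x, v⟫
    have h3 : HasDerivAt (fun t : ℝ => L / 2 * t ^ 2 * ‖v‖ ^ 2)
        (L * t * ‖v‖ ^ 2) t := by
      have := ((hasDerivAt_pow 2 t).const_mul (L / 2)).mul_const (‖v‖ ^ 2)
      refine this.congr_deriv ?_
      push_cast
      ring
    exact (h1.sub h2).sub h3
  have hanti : AntitoneOn ψ (Set.Icc (0 : ℝ) 1) := by
    apply antitoneOn_of_deriv_nonpos (convex_Icc 0 1)
    · exact fun t _ => (hd t).continuousAt.continuousWithinAt
    · exact fun t _ => ((hd t).differentiableAt).differentiableWithinAt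
    · intro t ht
      rw [interior_Icc] at ht
      rw [(hd t).deriv]
      have key : ⟪G (x + t • v) - G x, v⟫ ≤ L * t * ‖v‖ ^ 2 := by
        calc ⟪G (x + t • v) - G x, v⟫ ≤ ‖G (x + t • v) - G x‖ * ‖v‖ :=
              real_inner_le_norm _ _
          _ ≤ L * ‖(x + t • v) - x‖ * ‖v‖ := by
              have := hsmooth (x + t • v) x
              nlinarith [norm_nonneg v]
          _ = L * t * ‖v‖ ^ 2 := by
              rw [add_sub_cancel_left, norm_smul, Real.norm_eq_abs,
                abs_of_pos ht.1]
              ring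
      rw [inner_sub_left] at key
      linarith
  have hstep := hanti (Set.left_mem_Icc.2 zero_le_one)
    (Set.right_mem_Icc.2 zero_le_one) zero_le_one
  simp only [hψ, zero_smul, add_zero, zero_mul, sub_zero, one_smul, one_mul,
    one_pow, mul_one, zero_pow] at hstep
  -- hstep : f (x + v) - ⟪G x, v⟫ - L / 2 * ‖v‖ ^ 2 ≤ f x
  have hiv : ⟪G x, v⟫ = -L⁻¹ * ‖G x‖ ^ 2 := by
    rw [hv, real_inner_smul_right, real_inner_self_eq_norm_sq]
  have hnv : ‖v‖ ^ 2 = L⁻¹ ^ 2 * ‖G x‖ ^ 2 := by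
    rw [hv, norm_smul, Real.norm_eq_abs, abs_neg, abs_of_pos (inv_pos.2 hL)]
    ring
  have hfl := hℓ (x + v)
  rw [hiv, hnv] at hstep
  have e1 : -L⁻¹ * ‖G x‖ ^ 2 + L / 2 * (L⁻¹ ^ 2 * ‖G x‖ ^ 2)
      = -(‖G x‖ ^ 2 / (2 * L)) := by
    field_simp
    ring
  have h2 : ‖G x‖ ^ 2 / (2 * L) ≤ f x - ℓ := by linarith
  have h3 := (div_le_iff₀ (by positivity : (0:ℝ) < 2 * L)).1 h2
  linarith



open Finset

/-- Bounds for the AdaSPS stepsize: if each `f t` is differentiable and `L`-smooth,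
`ℓ t` lower-bounds `f t`, `∇f_t (x t) ≠ 0`, and `η` is the AdaSPS stepsize sequence,
then for every `t`,
`1/(2 c_p L √(Σ_{s≤t} (f_s(x_s) − ℓ_s))) ≤ η t ≤
 (f_t(x_t) − ℓ_t)/(c_p ‖∇f_t(x_t)‖² √(Σ_{s≤t} (f_s(x_s) − ℓ_s)))`. -/
theorem stmt_9 {d : ℕ} (L c_p : ℝ) (hL : 0 < L) (hcp : 0 < c_p)
    (f : ℕ → EuclideanSpace ℝ (Fin d) → ℝ)
    (G : ℕ → EuclideanSpace ℝ (Fin d) → EuclideanSpace ℝ (Fin d))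
    (x : ℕ → EuclideanSpace ℝ (Fin d)) (ℓ : ℕ → ℝ) (η : ℕ → ℝ)
    (hgrad : ∀ t y, HasGradientAt (f t) (G t y) y)
    (hsmooth : ∀ t u v, ‖G t u - G t v‖ ≤ L * ‖u - v‖)
    (hℓ : ∀ t y, ℓ t ≤ f t y)
    (hGne : ∀ t, G t (x t) ≠ 0)
    (hη0 : η 0 = (f 0 (x 0) - ℓ 0) /
      (c_p * ‖G 0 (x 0)‖ ^ 2 * Real.sqrt (f 0 (x 0) - ℓ 0)))
    (hη : ∀ t, η (t + 1) = min
      ((f (t + 1) (x (t + 1)) - ℓ (t + 1)) /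
        (c_p * ‖G (t + 1) (x (t + 1))‖ ^ 2 *
          Real.sqrt (∑ s ∈ range (t + 2), (f s (x s) - ℓ s))))
      (η t)) :
    ∀ t, 1 / (2 * c_p * L * Real.sqrt (∑ s ∈ range (t + 1), (f s (x s) - ℓ s))) ≤ η t ∧
      η t ≤ (f t (x t) - ℓ t) /
        (c_p * ‖G t (x t)‖ ^ 2 * Real.sqrt (∑ s ∈ range (t + 1), (f s (x s) - ℓ s))) := by
  have hgs : ∀ t, ‖G t (x t)‖ ^ 2 ≤ 2 * L * (f t (x t) - ℓ t) := fun t =>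
    grad_sq_le hL (hgrad t) (hsmooth t) (hℓ t) (x t)
  have hGpos : ∀ t, 0 < ‖G t (x t)‖ ^ 2 := fun t =>
    pow_pos (norm_pos_iff.2 (hGne t)) 2
  have hpos : ∀ t, 0 < f t (x t) - ℓ t := fun t => by
    nlinarith [hgs t, hGpos t]
  set S : ℕ → ℝ := fun t => ∑ s ∈ range (t + 1), (f s (x s) - ℓ s) with hS
  have hSpos : ∀ t, 0 < S t := fun t => by
    apply Finset.sum_pos (fun s _ => hpos s)
    exact ⟨t, Finset.self_mem_range_succ t⟩
  have hSmono : ∀ t, S t ≤ S (t + 1) := fun t => by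
    rw [hS]
    simp only [Finset.sum_range_succ (n := t + 1)]
    linarith [hpos (t + 1)]
  have hsq : ∀ t, 0 < Real.sqrt (S t) := fun t => Real.sqrt_pos.2 (hSpos t)
  have key : ∀ t, 1 / (2 * c_p * L * Real.sqrt (S t)) ≤
      (f t (x t) - ℓ t) / (c_p * ‖G t (x t)‖ ^ 2 * Real.sqrt (S t)) := by
    intro t
    rw [div_le_div_iff₀ (mul_pos (mul_pos (mul_pos two_pos hcp) hL) (hsq t))
      (mul_pos (mul_pos hcp (hGpos t)) (hsq t))]
    have h := mul_le_mul_of_nonneg_right (hgs t)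
      (by positivity : (0:ℝ) ≤ c_p * Real.sqrt (S t))
    nlinarith [hsq t]
  intro t
  induction t with
  | zero =>
      have h0 : η 0 = (f 0 (x 0) - ℓ 0) /
          (c_p * ‖G 0 (x 0)‖ ^ 2 * Real.sqrt (S 0)) := by
        rw [hη0, hS]
        simp [Finset.sum_range_one]
      refine ⟨?_, by rw [h0]⟩
      rw [h0]
      exact key 0
  | succ t ih =>
      rw [hη t]
      refine ⟨le_min (key (t + 1)) ?_, min_le_left _ _⟩
      refine le_trans ?_ ih.1
      apply one_div_le_one_div_of_le
        (mul_pos (mul_pos (mul_pos two_pos hcp) hL) (hsq t))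
      gcongr
      exact hSmono t
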